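/- Under the hypotheses of the previous statement, if T ≥ 2r then the linear operator π̂_L(T,ω,x̄) : C → W^{1,∞} is compact; consequently, for T ≥ 2r the operator π_L(T,ω,x̄) : W^{1,∞} → W^{1,∞} is also compact. -/

import Mathlib

open Set Filter Topology
open scoped NNReal ENNReal

noncomputable section

/-- Euclidean state space ℝⁿ. -/
abbrev Evec (n : ℕ) := EuclideanSpace ℝ (Fin n)

/-- The phase space `C = C([-r,0],ℝⁿ)` with the supremum norm. -/
abbrev Seg (n : ℕ) (r : ℝ) := C(Set.Icc (-r) (0:ℝ), Evec n)

/-- Evaluation of a segment at a real time, clamped to `[-r,0]`. -/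
def clamp (n : ℕ) (r : ℝ) (hr : 0 < r) (x : Seg n r) (s : ℝ) : Evec n :=
  x ⟨max (-r) (min s 0), ⟨le_max_left _ _, max_le (by linarith) (min_le_right _ _)⟩⟩

/-- A segment belongs to `W^{1,∞}` iff it is Lipschitz continuous. -/
def IsLip (n : ℕ) (r : ℝ) (f : Seg n r) : Prop := ∃ K : ℝ≥0, LipschitzWith K ⇑f

/-- Best Lipschitz constant (equals the essential supremum of the derivative). -/
def lipC (n : ℕ) (r : ℝ) (f : Seg n r) : ℝ :=
  sInf {K : ℝ | 0 ≤ K ∧ LipschitzWith K.toNNReal ⇑f}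

/-- The `W^{1,∞}` norm: maximum of the sup norm and the Lipschitz constant. -/
def Wnorm (n : ℕ) (r : ℝ) (f : Seg n r) : ℝ := max ‖f‖ (lipC n r f)

/-- Convergence of a sequence in `Ω × W^{1,∞}`. -/
def WTendsto (n : ℕ) (r : ℝ) {Ω : Type*} [MetricSpace Ω]
    (f : ℕ → Ω × Seg n r) (p : Ω × Seg n r) : Prop :=
  Tendsto (fun k => dist (f k).1 p.1 + Wnorm n r ((f k).2 - p.2)) atTop (nhds 0)

/-- (Sequential) compactness of a subset of `Ω × W^{1,∞}`. -/
def WCompact (n : ℕ) (r : ℝ) {Ω : Type*} [MetricSpace Ω] (S : Set (Ω × Seg n r)) : Prop :=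
  ∀ f : ℕ → Ω × Seg n r, (∀ k, f k ∈ S) →
    ∃ φ : ℕ → ℕ, StrictMono φ ∧ ∃ p ∈ S, WTendsto n r (fun k => f (φ k)) p

/-- Closure of a subset of `Ω × W^{1,∞}` in the `W^{1,∞}` topology. -/
def Wclosure (n : ℕ) (r : ℝ) {Ω : Type*} [MetricSpace Ω] (S : Set (Ω × Seg n r)) :
    Set (Ω × Seg n r) :=
  {p | ∃ f : ℕ → Ω × Seg n r, (∀ k, f k ∈ S) ∧ WTendsto n r f p}

/-- Positive `Π`-invariance of a set: semiorbits of its points are globally defined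
and remain in the set. -/
def PosInv (n : ℕ) (r : ℝ) {Ω : Type*} [MetricSpace Ω] (σ : ℝ → Ω → Ω)
    (u : ℝ → Ω → Seg n r → Seg n r) (β : Ω → Seg n r → ℝ≥0∞)
    (K : Set (Ω × Seg n r)) : Prop :=
  ∀ p ∈ K, β p.1 p.2 = ⊤ ∧ ∀ t : ℝ, 0 ≤ t → (σ t p.1, u t p.1 p.2) ∈ K

/-- A point `(ω,x)` of `K` admits a backward extension in `K`. -/
def HasBack (n : ℕ) (r : ℝ) {Ω : Type*} [MetricSpace Ω] (σ : ℝ → Ω → Ω)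
    (u : ℝ → Ω → Seg n r → Seg n r) (K : Set (Ω × Seg n r)) (p : Ω × Seg n r) : Prop :=
  ∃ θ : ℝ → Seg n r, θ 0 = p.2 ∧ (∀ s : ℝ, s ≤ 0 → (σ s p.1, θ s) ∈ K) ∧
    (∀ s : ℝ, s ≤ 0 → ∀ ε > (0:ℝ), ∃ δ > (0:ℝ), ∀ s' : ℝ, s' ≤ 0 → |s' - s| < δ →
      Wnorm n r (θ s' - θ s) < ε) ∧
    (∀ t s : ℝ, 0 ≤ t → s ≤ -t → u t (σ s p.1) (θ s) = θ (t + s))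

/-- Operator "norm" of a linear map from `C` to `W^{1,∞}`. -/
def opCW (n : ℕ) (r : ℝ) (f : Seg n r →L[ℝ] Seg n r) : ℝ :=
  sInf {M : ℝ | 0 ≤ M ∧ ∀ v, Wnorm n r (f v) ≤ M * ‖v‖}

/-- Operator "norm" of a linear map from `W^{1,∞}` to `W^{1,∞}`. -/
def opWW (n : ℕ) (r : ℝ) (f : Seg n r →L[ℝ] Seg n r) : ℝ :=
  sInf {M : ℝ | 0 ≤ M ∧ ∀ v, IsLip n r v → Wnorm n r (f v) ≤ M * Wnorm n r v}

/-- Upper Lyapunov exponent of a point for the linearized semiflow `P` on `W^{1,∞}`. -/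
def lypW (n : ℕ) (r : ℝ) {Ω : Type*} [MetricSpace Ω]
    (P : ℝ → Ω × Seg n r → (Seg n r →L[ℝ] Seg n r)) (p : Ω × Seg n r) : ℝ :=
  limsup (fun t : ℝ => Real.log (opWW n r (P t p)) / t) atTop

/-- Upper Lyapunov exponent of a set `S` for the linearized semiflow `P`. -/
def lamOf (n : ℕ) (r : ℝ) {Ω : Type*} [MetricSpace Ω]
    (P : ℝ → Ω × Seg n r → (Seg n r →L[ℝ] Seg n r)) (S : Set (Ω × Seg n r)) : ℝ :=
  sSup {l : ℝ | ∃ p ∈ S, l = lypW n r P p}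

section Stmt10Aux

variable {n : ℕ} {r : ℝ}

lemma wnorm_nonneg (f : Seg n r) : 0 ≤ Wnorm n r f :=
  le_trans (norm_nonneg f) (le_max_left _ _)

lemma lipC_nonneg (f : Seg n r) : 0 ≤ lipC n r f :=
  Real.sInf_nonneg fun _ hx => hx.1

lemma lipC_le {f : Seg n r} {c : ℝ} (hc : 0 ≤ c) (h : LipschitzWith c.toNNReal ⇑f) :
    lipC n r f ≤ c :=
  csInf_le ⟨0, fun _ hx => hx.1⟩ ⟨hc, h⟩

lemma lipC_le_wnorm (f : Seg n r) : lipC n r f ≤ Wnorm n r f := le_max_right _ _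

lemma lipschitzWith_lipC {f : Seg n r} (h : IsLip n r f) :
    LipschitzWith (lipC n r f).toNNReal ⇑f := by
  obtain ⟨K, hK⟩ := h
  have hne : Set.Nonempty {c : ℝ | 0 ≤ c ∧ LipschitzWith c.toNNReal ⇑f} :=
    ⟨K, K.coe_nonneg, by rwa [Real.toNNReal_coe]⟩
  rw [lipschitzWith_iff_dist_le_mul]
  intro x y
  rw [Real.coe_toNNReal _ (lipC_nonneg f)]
  rcases eq_or_lt_of_le (dist_nonneg (x := x) (y := y)) with h0 | h0
  · have hxy : x = y := by
      have := dist_eq_zero.mp h0.symm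
      exact this
    simp [hxy]
  · have hdiv : dist (f x) (f y) / dist x y ≤ lipC n r f := by
      refine le_csInf hne fun c hc => ?_
      rw [div_le_iff₀ h0]
      have := lipschitzWith_iff_dist_le_mul.mp hc.2 x y
      rwa [Real.coe_toNNReal _ hc.1] at this
    calc dist (f x) (f y) = dist (f x) (f y) / dist x y * dist x y := by field_simp
    _ ≤ lipC n r f * dist x y := by
      exact mul_le_mul_of_nonneg_right hdiv h0.le

lemma isLip_sub {f g : Seg n r} (hf : IsLip n r f) (hg : IsLip n r g) :
    IsLip n r (f - g) := by
  obtain ⟨Kf, hKf⟩ := hf; obtain ⟨Kg, hKg⟩ := hg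
  exact ⟨Kf + Kg, by rw [ContinuousMap.coe_sub]; exact hKf.sub hKg⟩

lemma lipC_le_add {f g : Seg n r} (hf : IsLip n r f) (hg : IsLip n r g) :
    lipC n r f ≤ lipC n r (f - g) + lipC n r g := by
  have h1 := lipschitzWith_lipC (isLip_sub hf hg)
  have h2 := lipschitzWith_lipC hg
  have h3 : LipschitzWith ((lipC n r (f - g)).toNNReal + (lipC n r g).toNNReal) ⇑f := by
    have h4 := h1.add h2
    have : (fun x => (f - g) x + g x) = ⇑f := by
      funext x; simp [ContinuousMap.sub_apply]
    rwa [this] at h4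
  refine lipC_le (add_nonneg (lipC_nonneg _) (lipC_nonneg _)) ?_
  rwa [Real.toNNReal_add (lipC_nonneg _) (lipC_nonneg _)]

lemma clamp_eq (hr : 0 < r) (x : Seg n r) {s : ℝ} (hs : s ∈ Set.Icc (-r) (0:ℝ)) :
    clamp n r hr x s = x ⟨s, hs⟩ := by
  have h : max (-r) (min s 0) = s := by
    rw [min_eq_left hs.2, max_eq_right hs.1]
  unfold clamp
  congr 1
  exact Subtype.ext h

lemma norm_clamp_le (hr : 0 < r) (x : Seg n r) (s : ℝ) :
    ‖clamp n r hr x s‖ ≤ ‖x‖ :=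
  ContinuousMap.norm_coe_le_norm x _

lemma clamp_eq_projIcc (hr : 0 < r) (x : Seg n r) :
    clamp n r hr x = fun s => x (Set.projIcc (-r) 0 (by linarith) s) := by
  funext s
  unfold clamp
  apply congrArg
  apply Subtype.ext
  simp [Set.projIcc, min_comm]

lemma continuous_clamp (hr : 0 < r) (x : Seg n r) : Continuous (clamp n r hr x) := by
  rw [clamp_eq_projIcc hr x]
  exact x.continuous.comp continuous_projIcc

lemma lipschitz_clamp (hr : 0 < r) {x : Seg n r} {L : ℝ≥0} (h : LipschitzWith L ⇑x) :
    LipschitzWith L (clamp n r hr x) := by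
  rw [clamp_eq_projIcc hr x]
  have := h.comp (LipschitzWith.projIcc (by linarith : (-r) ≤ 0)); rw [mul_one] at this; exact this

lemma norm_hasDerivAt_le_lip {E : Type*} [NormedAddCommGroup E] [NormedSpace ℝ E]
    {f : ℝ → E} {d : E} {L : ℝ≥0} {s : ℝ}
    (hd : HasDerivAt f d s) (hL : LipschitzWith L f) : ‖d‖ ≤ L := by
  have h := (hasDerivAt_iff_tendsto_slope.mp hd).norm
  refine le_of_tendsto h ?_
  filter_upwards [self_mem_nhdsWithin] with y hy
  have hys : (y : ℝ) ≠ s := hy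
  have h0 : |y - s| ≠ 0 := by
    simpa [abs_eq_zero, sub_eq_zero] using hys
  have hfb : ‖f y - f s‖ ≤ L * |y - s| := by
    have := hL.dist_le_mul y s
    rwa [dist_eq_norm, Real.dist_eq] at this
  have : ‖slope f s y‖ = |y - s|⁻¹ * ‖f y - f s‖ := by
    rw [slope_def_module, norm_smul, norm_inv, Real.norm_eq_abs]
  rw [this]
  rw [inv_mul_le_iff₀ (lt_of_le_of_ne (abs_nonneg _) (Ne.symm h0))]
  calc ‖f y - f s‖ ≤ L * |y - s| := hfb
  _ = |y - s| * L := mul_comm _ _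

lemma mvt_of_hasDerivAt {E : Type*} [NormedAddCommGroup E] [NormedSpace ℝ E]
    {z g : ℝ → E} {a b D : ℝ}
    (hderiv : ∀ t ∈ Set.Icc a b, HasDerivAt z (g t) t)
    (hg : ∀ t ∈ Set.Icc a b, ‖g t‖ ≤ D) :
    ∀ s ∈ Set.Icc a b, ∀ t ∈ Set.Icc a b, s ≤ t → ‖z t - z s‖ ≤ D * (t - s) := by
  intro s hs t ht hst
  have h1 : ∀ x ∈ Set.Icc s t, HasDerivWithinAt z (g x) (Set.Icc s t) x := fun x hx =>
    (hderiv x ⟨hs.1.trans hx.1, hx.2.trans ht.2⟩).hasDerivWithinAt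
  have h2 : ∀ x ∈ Set.Ico s t, ‖g x‖ ≤ D := fun x hx =>
    hg x ⟨hs.1.trans hx.1, hx.2.le.trans ht.2⟩
  exact norm_image_sub_le_of_norm_deriv_le_segment' h1 h2 t (Set.right_mem_Icc.mpr hst)

lemma mvt_of_hasDerivAt_Ioc {E : Type*} [NormedAddCommGroup E] [NormedSpace ℝ E]
    {z g : ℝ → E} {a b D : ℝ} (hcont : Continuous z) (hD : 0 ≤ D)
    (hderiv : ∀ t ∈ Set.Ioc a b, HasDerivAt z (g t) t)
    (hg : ∀ t ∈ Set.Ioc a b, ‖g t‖ ≤ D) :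
    ∀ s t : ℝ, a ≤ s → s ≤ t → t ≤ b → ‖z t - z s‖ ≤ D * (t - s) := by
  have inner : ∀ s t : ℝ, a < s → s ≤ t → t ≤ b → ‖z t - z s‖ ≤ D * (t - s) := by
    intro s t has hst htb
    refine mvt_of_hasDerivAt (a := s) (b := t)
      (fun x hx => hderiv x ⟨has.trans_le hx.1, hx.2.trans htb⟩)
      (fun x hx => hg x ⟨has.trans_le hx.1, hx.2.trans htb⟩)
      s ⟨le_refl s, hst⟩ t ⟨hst, le_refl t⟩ hst
  intro s t has hst htb
  rcases lt_or_ge a s with has' | hsa'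
  · exact inner s t has' hst htb
  · have hsa : s = a := le_antisymm hsa' has
    rw [hsa]
    have hat : a ≤ t := hsa ▸ hst
    rcases eq_or_lt_of_le hat with h' | hst'
    · rw [← h']; simp
    · have h1 : Tendsto (fun s' => ‖z t - z s'‖) (𝓝[>] a) (𝓝 ‖z t - z a‖) :=
        ((continuous_const.sub hcont).norm.tendsto a).mono_left nhdsWithin_le_nhds
      have h2 : Tendsto (fun s' => D * (t - s')) (𝓝[>] a) (𝓝 (D * (t - a))) :=
        ((continuous_const.mul (continuous_const.sub continuous_id)).tendsto a).mono_left
          nhdsWithin_le_nhds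
      refine le_of_tendsto_of_tendsto h1 h2 ?_
      filter_upwards [Ioo_mem_nhdsGT_of_mem ⟨le_refl a, hst'⟩] with s' hs'
      exact inner s' t hs'.1 hs'.2.le htb

lemma bootstrap {E : Type*} [NormedAddCommGroup E] [NormedSpace ℝ E]
    {z : ℝ → E} (hz : Continuous z) {C A a b : ℝ}
    (hC : 0 < C) (hA : 0 < A) (hab : a < b) (hstep : C * (b - a) ≤ 1 / 2)
    (hpast : ∀ s, s ≤ a → ‖z s‖ ≤ A)
    (hderiv : ∀ t, a < t → t ≤ b → ∀ D, A ≤ D →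
      (∀ s, a < s → s ≤ t → ‖z s‖ ≤ D) → ∃ g, HasDerivAt z g t ∧ ‖g‖ ≤ C * D) :
    ∀ t, a ≤ t → t ≤ b → ‖z t‖ ≤ 2 * A := by
  classical
  set S : Set ℝ := {t | t ∈ Set.Icc a b ∧ ∀ s, a ≤ s → s ≤ t → ‖z s‖ ≤ 2 * A} with hS
  have haS : a ∈ S :=
    ⟨⟨le_refl a, hab.le⟩, fun s _ hs2 => (hpast s hs2).trans (by linarith)⟩
  have hSb : BddAbove S := ⟨b, fun t ht => ht.1.2⟩
  have hSne : S.Nonempty := ⟨a, haS⟩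
  set c := sSup S with hc
  have hac : a ≤ c := le_csSup hSb haS
  have hcb : c ≤ b := csSup_le hSne fun t ht => ht.1.2
  have hbound_lt : ∀ s, a ≤ s → s < c → ‖z s‖ ≤ 2 * A := by
    intro s hs1 hs2
    obtain ⟨t, htS, hst⟩ := exists_lt_of_lt_csSup hSne hs2
    exact htS.2 s hs1 hst.le
  have hzc : ‖z c‖ ≤ 2 * A := by
    rcases eq_or_lt_of_le hac with h | hac'
    · rw [← h]
      exact (hpast _ le_rfl).trans (by linarith)
    · refine le_of_tendsto ((hz.norm.tendsto c).mono_left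
        (nhdsWithin_le_nhds (s := Set.Iio c))) ?_
      filter_upwards [Ioo_mem_nhdsLT_of_mem ⟨hac', le_refl c⟩] with s hs
      exact hbound_lt s hs.1.le hs.2
  have hcS : c ∈ S := by
    refine ⟨⟨hac, hcb⟩, fun s hs1 hs2 => ?_⟩
    rcases lt_or_eq_of_le hs2 with h | h
    · exact hbound_lt s hs1 h
    · exact h ▸ hzc
  have hbc : b ≤ c := by
    by_contra hlt
    push_neg at hlt
    have hder : ∀ t, a < t → t ≤ c → ∃ g, HasDerivAt z g t ∧ ‖g‖ ≤ C * (2 * A) := by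
      intro t h1 h2
      exact hderiv t h1 (h2.trans hcb) (2 * A) (by linarith)
        (fun s hs1 hs2 => hcS.2 s hs1.le (hs2.trans h2))
    choose! g hg1 hg2 using hder
    have hgm : ∀ t, a ≤ t → t ≤ c → ‖z t - z a‖ ≤ C * (2 * A) * (t - a) := by
      intro t h1 h2
      exact mvt_of_hasDerivAt_Ioc hz (by positivity)
        (fun x hx => hg1 x hx.1 hx.2) (fun x hx => hg2 x hx.1 hx.2) a t le_rfl h1 h2
    have hzc' : ‖z c‖ < 2 * A := by
      have h1 : ‖z c‖ ≤ ‖z a‖ + C * (2 * A) * (c - a) := by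
        have h2 := hgm c hac le_rfl
        calc ‖z c‖ = ‖z a + (z c - z a)‖ := by congr 1; abel
        _ ≤ ‖z a‖ + ‖z c - z a‖ := norm_add_le _ _
        _ ≤ ‖z a‖ + C * (2 * A) * (c - a) := by linarith
      have h2 : ‖z a‖ ≤ A := hpast a le_rfl
      have h3 : C * (c - a) < C * (b - a) := by
        have := sub_lt_sub_right hlt a
        exact mul_lt_mul_of_pos_left this hC
      nlinarith
    have hev : z ⁻¹' (Metric.ball (z c) (2 * A - ‖z c‖)) ∈ 𝓝 c :=
      hz.continuousAt (Metric.ball_mem_nhds _ (by linarith))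
    obtain ⟨ε, hε, hball⟩ := Metric.mem_nhds_iff.mp hev
    set t' := min b (c + ε / 2) with ht'
    have htc : c < t' := lt_min hlt (by linarith)
    have ht'S : t' ∈ S := by
      refine ⟨⟨hac.trans htc.le, min_le_left _ _⟩, fun s hs1 hs2 => ?_⟩
      rcases le_or_gt s c with h | h
      · exact hcS.2 s hs1 h
      · have hsball : s ∈ Metric.ball c ε := by
          rw [Metric.mem_ball, Real.dist_eq, abs_of_pos (by linarith)]
          have : s ≤ c + ε / 2 := hs2.trans (min_le_right _ _)
          linarith
        have := hball hsball
        rw [Set.mem_preimage, Metric.mem_ball, dist_eq_norm] at this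
        calc ‖z s‖ = ‖z c + (z s - z c)‖ := by congr 1; abel
        _ ≤ ‖z c‖ + ‖z s - z c‖ := norm_add_le _ _
        _ ≤ 2 * A := by linarith
    have := le_csSup hSb ht'S
    rw [← hc] at this
    linarith
  intro t h1 h2
  exact hcS.2 t h1 (h2.trans hbc)

lemma apriori {E : Type*} [NormedAddCommGroup E] [NormedSpace ℝ E]
    {z : ℝ → E} (hz : Continuous z) {M CL T : ℝ} (hM0 : 0 ≤ M) (hCL : 0 ≤ CL)
    (N : ℕ) (hNT : T ≤ (N : ℝ) * (1 / (2 * (CL + 1))))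
    (hneg : ∀ s : ℝ, s ≤ 0 → ‖z s‖ ≤ M)
    (hder : ∀ t : ℝ, 0 < t → t ≤ T → ∀ D : ℝ, M ≤ D →
      (∀ s : ℝ, 0 < s → s ≤ t → ‖z s‖ ≤ D) → ∃ g, HasDerivAt z g t ∧ ‖g‖ ≤ CL * D) :
    ∀ t : ℝ, t ≤ T → ‖z t‖ ≤ (M + 1) * 2 ^ N := by
  have hC1 : (0:ℝ) < CL + 1 := by linarith
  have hδ : (0:ℝ) < 1 / (2 * (CL + 1)) := by positivity
  set δ : ℝ := 1 / (2 * (CL + 1)) with hδdef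
  have hQ : ∀ k : ℕ, ∀ t : ℝ, t ≤ (k : ℝ) * δ → t ≤ T → ‖z t‖ ≤ (M + 1) * 2 ^ k := by
    intro k
    induction k with
    | zero =>
      intro t ht _
      simp only [Nat.cast_zero, zero_mul] at ht
      calc ‖z t‖ ≤ M := hneg t ht
      _ ≤ (M + 1) * 2 ^ 0 := by simp only [pow_zero, mul_one]; linarith
    | succ k ih =>
      intro t ht htT
      have h2k : (1:ℝ) ≤ 2 ^ k := one_le_pow₀ (by norm_num)
      have hA0 : (0:ℝ) < (M + 1) * 2 ^ k := by positivity
      rcases le_or_gt t ((k:ℝ) * δ) with hle | hgt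
      · refine (ih t hle htT).trans ?_
        rw [pow_succ]
        nlinarith
      · have hkd0 : (0:ℝ) ≤ (k:ℝ) * δ := by positivity
        have hbT : (k:ℝ) * δ < T := hgt.trans_le htT
        have hcast : ((k+1 : ℕ) : ℝ) * δ = (k:ℝ) * δ + δ := by push_cast; ring
        have hab : (k:ℝ) * δ < min (((k+1 : ℕ) : ℝ) * δ) T := by
          refine lt_min ?_ hbT
          rw [hcast]
          linarith
        have hbu : min (((k+1 : ℕ) : ℝ) * δ) T ≤ (k:ℝ) * δ + δ :=
          (min_le_left _ _).trans (le_of_eq hcast)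
        have hbT' : min (((k+1 : ℕ) : ℝ) * δ) T ≤ T := min_le_right _ _
        have hstep : (CL + 1) * (min (((k+1 : ℕ) : ℝ) * δ) T - (k:ℝ)*δ) ≤ 1/2 := by
          have hle0 : min (((k+1 : ℕ) : ℝ) * δ) T - (k:ℝ)*δ ≤ δ := by linarith
          have hle1 : (CL + 1) * (min (((k+1 : ℕ) : ℝ) * δ) T - (k:ℝ)*δ) ≤ (CL + 1) * δ :=
            mul_le_mul_of_nonneg_left hle0 hC1.le
          have heq1 : (CL + 1) * δ = 1/2 := by
            rw [hδdef]
            field_simp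
          linarith
        have hpast : ∀ s : ℝ, s ≤ (k:ℝ)*δ → ‖z s‖ ≤ (M+1)*2^k := by
          intro s hs
          rcases le_or_gt s 0 with hs0 | hs0
          · exact (hneg s hs0).trans (by nlinarith)
          · exact ih s hs (by linarith)
        have hderiv : ∀ t', (k:ℝ)*δ < t' → t' ≤ min (((k+1 : ℕ) : ℝ) * δ) T →
            ∀ D, (M+1)*2^k ≤ D →
            (∀ s, (k:ℝ)*δ < s → s ≤ t' → ‖z s‖ ≤ D) →
            ∃ g, HasDerivAt z g t' ∧ ‖g‖ ≤ (CL + 1) * D := by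
          intro t' h1 h2 D hAD hDs
          have ht'0 : 0 < t' := lt_of_le_of_lt hkd0 h1
          have hD0 : 0 ≤ D := le_trans hA0.le hAD
          have hMD : M ≤ D := by nlinarith
          have hwin : ∀ s : ℝ, 0 < s → s ≤ t' → ‖z s‖ ≤ D := by
            intro s hs0 hst'
            rcases le_or_gt s ((k:ℝ)*δ) with hsk | hsk
            · exact (hpast s hsk).trans hAD
            · exact hDs s hsk hst'
          obtain ⟨g, hg1, hg2⟩ := hder t' ht'0 (h2.trans hbT') D hMD hwin
          exact ⟨g, hg1, hg2.trans (by nlinarith)⟩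
        have hconc := bootstrap hz hC1 hA0 hab hstep hpast hderiv t hgt.le
          (le_min (by exact_mod_cast ht) htT)
        calc ‖z t‖ ≤ 2 * ((M+1)*2^k) := hconc
        _ = (M+1)*2^(k+1) := by ring
  intro t htT
  exact hQ N t (htT.trans hNT) htT

end Stmt10Aux

set_option maxHeartbeats 1000000
set_option synthInstance.maxHeartbeats 400000

/-- For `T ≥ 2r` the operator `π̂_L(T,ω,x̄) : C → W^{1,∞}` is compact,
and consequently so is `π_L(T,ω,x̄) : W^{1,∞} → W^{1,∞}` (compactness expressed by:
bounded sequences have subsequences whose images converge in the `W^{1,∞}` norm). -/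
theorem stmt10 (n : ℕ) (r : ℝ) (hr : 0 < r)
    -- the base flow on a compact metric space
    (Ω : Type) [MetricSpace Ω] [CompactSpace Ω]
    (σ : ℝ → Ω → Ω)
    (hσc : Continuous fun p : ℝ × Ω => σ p.1 p.2)
    (hσ0 : ∀ ω, σ 0 ω = ω)
    (hσadd : ∀ t s : ℝ, ∀ ω, σ (t + s) ω = σ t (σ s ω))
    -- the vector field F, hypothesis H1
    (F : Ω → Evec n → Evec n → Evec n)
    (hFc : Continuous fun p : Ω × Evec n × Evec n => F p.1 p.2.1 p.2.2)
    (D2F D3F : Ω → Evec n → Evec n → (Evec n →L[ℝ] Evec n))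
    (hD2F : ∀ ω a b, HasFDerivAt (fun y => F ω y b) (D2F ω a b) a)
    (hD3F : ∀ ω a b, HasFDerivAt (fun y => F ω a y) (D3F ω a b) b)
    (hD2Fc : Continuous fun p : Ω × Evec n × Evec n => D2F p.1 p.2.1 p.2.2)
    (hD3Fc : Continuous fun p : Ω × Evec n × Evec n => D3F p.1 p.2.1 p.2.2)
    -- the state-dependent delay τ, hypothesis H2(1)
    (τ : Ω → Seg n r → ℝ)
    (hτmem : ∀ ω x, τ ω x ∈ Set.Icc (0:ℝ) r)
    (hτc : Continuous fun p : Ω × Seg n r => τ p.1 p.2)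
    (D2τ : Ω → Seg n r → (Seg n r →L[ℝ] ℝ))
    (hD2τ : ∀ ω x, HasFDerivAt (τ ω) (D2τ ω x) x)
    (hD2τc : Continuous fun p : Ω × Seg n r => D2τ p.1 p.2)
    -- the (unique) maximal solutions y(·,ω,x) with maximal time β(ω,x), and the
    -- induced skew-product semiflow Π(t,ω,x) = (σ t ω, u t ω x) of solution segments
    (β : Ω → Seg n r → ℝ≥0∞)
    (hβpos : ∀ ω x, 0 < β ω x)
    (u : ℝ → Ω → Seg n r → Seg n r)
    (Y : Ω → Seg n r → ℝ → Evec n)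
    (hY0 : ∀ ω x, ∀ s : ℝ, s ≤ 0 → Y ω x s = clamp n r hr x s)
    (hYode : ∀ ω x, ∀ t : ℝ, 0 < t → ENNReal.ofReal t < β ω x →
      HasDerivAt (Y ω x) (F (σ t ω) (Y ω x t) (Y ω x (t - τ (σ t ω) (u t ω x)))) t)
    (hu : ∀ ω x, ∀ t : ℝ, 0 ≤ t → ENNReal.ofReal t < β ω x →
      ∀ s : ℝ, -r ≤ s → s ≤ 0 → clamp n r hr (u t ω x) s = Y ω x (t + s))
    (hcoc : ∀ ω x, ∀ t s : ℝ, 0 ≤ t → 0 ≤ s → ENNReal.ofReal (t + s) < β ω x →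
      u (t + s) ω x = u t (σ s ω) (u s ω x))
    (hmax : ∀ ω x,
      (∃ M : ℝ, ∀ t : ℝ, 0 ≤ t → ENNReal.ofReal t < β ω x → ‖u t ω x‖ ≤ M) →
      β ω x = ⊤)
    -- a positively invariant compact subset of Ω × W^{1,∞} whose points all admit
    -- backward extension in K
    (K : Set (Ω × Seg n r))
    (hKlip : ∀ p ∈ K, IsLip n r p.2)
    (hKcpt : WCompact n r K)
    (hKinv : PosInv n r σ u β K)
    (hKback : ∀ p ∈ K, HasBack n r σ u K p)
    -- the linearized operator L along K, defined from D2F, D3F, D2τ and the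
    -- derivative Dx of the (C¹) segments of the points of K
    (Dx : Ω × Seg n r → ℝ → Evec n)
    (hDx : ∀ p ∈ K, ∀ s ∈ Set.Ioo (-r) (0:ℝ), HasDerivAt (clamp n r hr p.2) (Dx p s) s)
    (Lop : Ω × Seg n r → (Seg n r →L[ℝ] Evec n))
    (hLdef : ∀ p ∈ K, ∀ φv : Seg n r, Lop p φv =
      D2F p.1 (clamp n r hr p.2 0) (clamp n r hr p.2 (-(τ p.1 p.2))) (clamp n r hr φv 0)
      + D3F p.1 (clamp n r hr p.2 0) (clamp n r hr p.2 (-(τ p.1 p.2)))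
          (clamp n r hr φv (-(τ p.1 p.2)))
      - (D2τ p.1 p.2 φv) •
          D3F p.1 (clamp n r hr p.2 0) (clamp n r hr p.2 (-(τ p.1 p.2)))
            (Dx p (-(τ p.1 p.2))))
    -- the solutions z(·,p,v) of the variational equation ż = L(Π(t,p))z_t and the
    -- induced linear skew-product cocycle P(t,p) of solution segments
    (P : ℝ → Ω × Seg n r → (Seg n r →L[ℝ] Seg n r))
    (Z : Ω × Seg n r → Seg n r → ℝ → Evec n)
    (hZ0 : ∀ p v, ∀ s : ℝ, s ≤ 0 → Z p v s = clamp n r hr v s)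
    (hZode : ∀ p ∈ K, ∀ v : Seg n r, ∀ t : ℝ, 0 < t →
      HasDerivAt (Z p v) (Lop (σ t p.1, u t p.1 p.2) (P t p v)) t)
    (hPseg : ∀ p v, ∀ t : ℝ, 0 ≤ t → ∀ s : ℝ, -r ≤ s → s ≤ 0 →
      clamp n r hr (P t p v) s = Z p v (t + s))
    (T : ℝ) (hT : 2 * r ≤ T) :
    (∀ p ∈ K, ∀ (v : ℕ → Seg n r) (M : ℝ), (∀ m, ‖v m‖ ≤ M) →
      ∃ φ : ℕ → ℕ, StrictMono φ ∧ ∃ w : Seg n r, IsLip n r w ∧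
        Tendsto (fun k => Wnorm n r (P T p (v (φ k)) - w)) atTop (nhds 0)) ∧
    (∀ p ∈ K, ∀ (v : ℕ → Seg n r) (M : ℝ),
      (∀ m, IsLip n r (v m) ∧ Wnorm n r (v m) ≤ M) →
      ∃ φ : ℕ → ℕ, StrictMono φ ∧ ∃ w : Seg n r, IsLip n r w ∧
        Tendsto (fun k => Wnorm n r (P T p (v (φ k)) - w)) atTop (nhds 0)) := by
  classical
  have hr0 : (0:ℝ) < r := hr
  have hT0 : (0:ℝ) ≤ T := by linarith
  have main : ∀ p ∈ K, ∀ (v : ℕ → Seg n r) (M : ℝ), (∀ m, ‖v m‖ ≤ M) →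
      ∃ φ : ℕ → ℕ, StrictMono φ ∧ ∃ w : Seg n r, IsLip n r w ∧
        Tendsto (fun k => Wnorm n r (P T p (v (φ k)) - w)) atTop (nhds 0) := by
    intro p hp v M hvM
    have hM0 : 0 ≤ M := (norm_nonneg _).trans (hvM 0)
    -- K is compact in the product topology
    have hKseq : IsSeqCompact K := by
      intro f hf
      obtain ⟨φ, hφ, q, hqK, hW⟩ := hKcpt f hf
      refine ⟨q, hqK, φ, hφ, ?_⟩
      rw [tendsto_iff_dist_tendsto_zero]
      refine squeeze_zero (fun k => dist_nonneg) (fun k => ?_) hW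
      rw [Prod.dist_eq]
      refine max_le (le_add_of_nonneg_right (wnorm_nonneg _)) ?_
      rw [dist_eq_norm]
      exact (le_max_left _ _).trans (le_add_of_nonneg_left dist_nonneg)
    have hKcompact : IsCompact K := hKseq.isCompact
    -- uniform bound on the Lipschitz constants of elements of K
    have hLam : ∃ Λ : ℝ, 0 ≤ Λ ∧ ∀ q ∈ K, lipC n r q.2 ≤ Λ := by
      by_contra hcon
      push_neg at hcon
      have hpick : ∀ k : ℕ, ∃ q, q ∈ K ∧ (k:ℝ) < lipC n r q.2 := by
        intro k
        obtain ⟨q, hqK, hq⟩ := hcon (k:ℝ) (Nat.cast_nonneg k)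
        exact ⟨q, hqK, hq⟩
      choose q hqK hq using hpick
      obtain ⟨φ, hφ, q', hq'K, hW⟩ := hKcpt q hqK
      have hW2 : Tendsto (fun k => Wnorm n r ((q (φ k)).2 - q'.2)) atTop (𝓝 0) :=
        squeeze_zero (fun k => wnorm_nonneg _)
          (fun k => le_add_of_nonneg_left dist_nonneg) hW
      have hev : ∀ᶠ k in atTop, Wnorm n r ((q (φ k)).2 - q'.2) < 1 :=
        hW2.eventually_lt_const one_pos
      obtain ⟨k, hk1, hk2⟩ :=
        (hev.and (eventually_ge_atTop (⌈(1:ℝ) + lipC n r q'.2⌉₊ + 1))).exists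
      have hA := hq (φ k)
      have hB := lipC_le_add (hKlip _ (hqK (φ k))) (hKlip _ hq'K)
      have hCC := lipC_le_wnorm ((q (φ k)).2 - q'.2)
      have hE : (k:ℝ) ≤ ((φ k : ℕ) : ℝ) := Nat.cast_le.mpr hφ.le_apply
      have hF : (1:ℝ) + lipC n r q'.2 ≤ (⌈(1:ℝ) + lipC n r q'.2⌉₊ : ℝ) := Nat.le_ceil _
      have hG : ((⌈(1:ℝ) + lipC n r q'.2⌉₊ : ℝ) + 1) ≤ (k:ℝ) := by exact_mod_cast hk2
      linarith
    obtain ⟨Λ, hΛ0, hΛ⟩ := hLam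
    -- uniform bounds for the coefficients of `Lop` on K
    have hclamp_cont : ∀ (c : Ω × Seg n r → ℝ), Continuous c →
        Continuous (fun q : Ω × Seg n r => clamp n r hr q.2 (c q)) := by
      intro c hc
      have h2 : (fun q : Ω × Seg n r => clamp n r hr q.2 (c q)) =
          (fun pr : Seg n r × (Set.Icc (-r) (0:ℝ)) => pr.1 pr.2) ∘
          (fun q => (q.2, Set.projIcc (-r) 0 (by linarith) (c q))) := by
        funext q
        simp only [Function.comp]
        rw [clamp_eq_projIcc hr]
      rw [h2]
      exact continuous_eval.comp
        (continuous_snd.prodMk (continuous_projIcc.comp hc))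
    have hcont0 : Continuous (fun q : Ω × Seg n r => clamp n r hr q.2 0) :=
      hclamp_cont _ continuous_const
    have hcontτ : Continuous (fun q : Ω × Seg n r => clamp n r hr q.2 (-(τ q.1 q.2))) :=
      hclamp_cont _ hτc.neg
    have htrip : Continuous (fun q : Ω × Seg n r =>
        ((q.1, clamp n r hr q.2 0, clamp n r hr q.2 (-(τ q.1 q.2))) : Ω × Evec n × Evec n)) :=
      continuous_fst.prodMk (hcont0.prodMk hcontτ)
    have hGc : Continuous (fun q : Ω × Seg n r =>
        ‖D2F q.1 (clamp n r hr q.2 0) (clamp n r hr q.2 (-(τ q.1 q.2)))‖ +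
        ‖D3F q.1 (clamp n r hr q.2 0) (clamp n r hr q.2 (-(τ q.1 q.2)))‖ +
        ‖D2τ q.1 q.2‖) := by
      refine Continuous.add (Continuous.add ?_ ?_) ?_
      · exact Continuous.norm (E := Evec n →L[ℝ] Evec n) (hD2Fc.comp htrip)
      · exact Continuous.norm (E := Evec n →L[ℝ] Evec n) (hD3Fc.comp htrip)
      · exact Continuous.norm (E := Seg n r →L[ℝ] ℝ) hD2τc
    obtain ⟨C0, hC0⟩ := hKcompact.exists_bound_of_continuousOn hGc.continuousOn
    have hGb : ∀ q ∈ K,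
        ‖D2F q.1 (clamp n r hr q.2 0) (clamp n r hr q.2 (-(τ q.1 q.2)))‖ +
        ‖D3F q.1 (clamp n r hr q.2 0) (clamp n r hr q.2 (-(τ q.1 q.2)))‖ +
        ‖D2τ q.1 q.2‖ ≤ C0 := by
      intro q hq
      have h := hC0 q hq
      rw [Real.norm_eq_abs] at h
      exact (le_abs_self _).trans h
    have hC00 : 0 ≤ C0 := by
      have h := hGb p hp
      have h1 := norm_nonneg (D2F p.1 (clamp n r hr p.2 0) (clamp n r hr p.2 (-(τ p.1 p.2))))
      have h2 := norm_nonneg (D3F p.1 (clamp n r hr p.2 0) (clamp n r hr p.2 (-(τ p.1 p.2))))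
      have h3 := norm_nonneg (D2τ p.1 p.2)
      linarith
    set CL : ℝ := C0 + C0 + C0 * (C0 * Λ) with hCLdef
    have hCL0 : 0 ≤ CL := by positivity
    -- uniform bound for Lop on K
    have hLopB : ∀ q ∈ K, ∀ ψ : Seg n r, ‖Lop q ψ‖ ≤ CL * ‖ψ‖ := by
      intro q hq ψ
      rw [hLdef q hq ψ]
      have hGq := hGb q hq
      have n2 := norm_nonneg (D2F q.1 (clamp n r hr q.2 0) (clamp n r hr q.2 (-(τ q.1 q.2))))
      have n3 := norm_nonneg (D3F q.1 (clamp n r hr q.2 0) (clamp n r hr q.2 (-(τ q.1 q.2))))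
      have n4 := norm_nonneg (D2τ q.1 q.2)
      have ha1 : ‖D2F q.1 (clamp n r hr q.2 0) (clamp n r hr q.2 (-(τ q.1 q.2)))‖ ≤ C0 := by
        linarith
      have ha3 : ‖D3F q.1 (clamp n r hr q.2 0) (clamp n r hr q.2 (-(τ q.1 q.2)))‖ ≤ C0 := by
        linarith
      have haτ : ‖D2τ q.1 q.2‖ ≤ C0 := by linarith
      have h1 : ‖D2F q.1 (clamp n r hr q.2 0) (clamp n r hr q.2 (-(τ q.1 q.2)))
          (clamp n r hr ψ 0)‖ ≤ C0 * ‖ψ‖ :=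
        (ContinuousLinearMap.le_opNorm _ _).trans
          (mul_le_mul ha1 (norm_clamp_le hr ψ 0) (norm_nonneg _) hC00)
      have h2 : ‖D3F q.1 (clamp n r hr q.2 0) (clamp n r hr q.2 (-(τ q.1 q.2)))
          (clamp n r hr ψ (-(τ q.1 q.2)))‖ ≤ C0 * ‖ψ‖ :=
        (ContinuousLinearMap.le_opNorm _ _).trans
          (mul_le_mul ha3 (norm_clamp_le hr ψ _) (norm_nonneg _) hC00)
      have h3 : ‖(D2τ q.1 q.2 ψ) • D3F q.1 (clamp n r hr q.2 0)
          (clamp n r hr q.2 (-(τ q.1 q.2))) (Dx q (-(τ q.1 q.2)))‖ ≤ C0 * ‖ψ‖ * (C0 * Λ) := by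
        rcases eq_or_lt_of_le (hτmem q.1 q.2).1 with hτ0 | hτpos
        · have hz : D2τ q.1 q.2 = 0 := by
            refine IsLocalMin.hasFDerivAt_eq_zero ?_ (hD2τ q.1 q.2)
            refine Filter.Eventually.of_forall fun y => ?_
            rw [← hτ0]
            exact (hτmem q.1 y).1
          rw [hz]
          simp only [ContinuousLinearMap.zero_apply, zero_smul, norm_zero]
          positivity
        · rcases eq_or_lt_of_le (hτmem q.1 q.2).2 with hτr | hτlt
          · have hz : D2τ q.1 q.2 = 0 := by
              refine IsLocalMax.hasFDerivAt_eq_zero ?_ (hD2τ q.1 q.2)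
              refine Filter.Eventually.of_forall fun y => ?_
              rw [hτr]
              exact (hτmem q.1 y).2
            rw [hz]
            simp only [ContinuousLinearMap.zero_apply, zero_smul, norm_zero]
            positivity
          · have hmemo : -(τ q.1 q.2) ∈ Set.Ioo (-r) (0:ℝ) := ⟨by linarith, by linarith⟩
            have hlip2 : LipschitzWith Λ.toNNReal (clamp n r hr q.2) := by
              refine lipschitz_clamp hr ?_
              exact (lipschitzWith_lipC (hKlip q hq)).weaken
                (Real.toNNReal_mono (hΛ q hq))
            have hdx : ‖Dx q (-(τ q.1 q.2))‖ ≤ Λ := by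
              have h := norm_hasDerivAt_le_lip (hDx q hq _ hmemo) hlip2
              rwa [Real.coe_toNNReal _ hΛ0] at h
            rw [norm_smul]
            have hsc : ‖D2τ q.1 q.2 ψ‖ ≤ C0 * ‖ψ‖ :=
              (ContinuousLinearMap.le_opNorm _ _).trans
                (mul_le_mul_of_nonneg_right haτ (norm_nonneg _))
            have hvec : ‖D3F q.1 (clamp n r hr q.2 0) (clamp n r hr q.2 (-(τ q.1 q.2)))
                (Dx q (-(τ q.1 q.2)))‖ ≤ C0 * Λ :=
              (ContinuousLinearMap.le_opNorm _ _).trans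
                (mul_le_mul ha3 hdx (norm_nonneg _) hC00)
            exact mul_le_mul hsc hvec (norm_nonneg _) (by positivity)
      calc ‖D2F q.1 (clamp n r hr q.2 0) (clamp n r hr q.2 (-(τ q.1 q.2))) (clamp n r hr ψ 0)
            + D3F q.1 (clamp n r hr q.2 0) (clamp n r hr q.2 (-(τ q.1 q.2)))
              (clamp n r hr ψ (-(τ q.1 q.2)))
            - (D2τ q.1 q.2 ψ) • D3F q.1 (clamp n r hr q.2 0) (clamp n r hr q.2 (-(τ q.1 q.2)))
              (Dx q (-(τ q.1 q.2)))‖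
          ≤ ‖D2F q.1 (clamp n r hr q.2 0) (clamp n r hr q.2 (-(τ q.1 q.2))) (clamp n r hr ψ 0)
            + D3F q.1 (clamp n r hr q.2 0) (clamp n r hr q.2 (-(τ q.1 q.2)))
              (clamp n r hr ψ (-(τ q.1 q.2)))‖
            + ‖(D2τ q.1 q.2 ψ) • D3F q.1 (clamp n r hr q.2 0)
              (clamp n r hr q.2 (-(τ q.1 q.2))) (Dx q (-(τ q.1 q.2)))‖ := norm_sub_le _ _
      _ ≤ (C0 * ‖ψ‖ + C0 * ‖ψ‖) + C0 * ‖ψ‖ * (C0 * Λ) := by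
          have h4 := norm_add_le
            (D2F q.1 (clamp n r hr q.2 0) (clamp n r hr q.2 (-(τ q.1 q.2))) (clamp n r hr ψ 0))
            (D3F q.1 (clamp n r hr q.2 0) (clamp n r hr q.2 (-(τ q.1 q.2)))
              (clamp n r hr ψ (-(τ q.1 q.2))))
          linarith
      _ = CL * ‖ψ‖ := by rw [hCLdef]; ring
    -- basic facts about the solutions of the variational equation
    have hzneg : ∀ (vv : Seg n r) (Mv : ℝ), ‖vv‖ ≤ Mv → ∀ s : ℝ, s ≤ 0 → ‖Z p vv s‖ ≤ Mv := by
      intro vv Mv hMv s hs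
      rw [hZ0 p vv s hs]
      exact (norm_clamp_le hr vv s).trans hMv
    have hzcont : ∀ vv : Seg n r, Continuous (Z p vv) := by
      intro vv
      rw [continuous_iff_continuousAt]
      intro a
      rcases lt_or_ge a 0 with ha | ha
      · refine ContinuousAt.congr (continuous_clamp hr vv).continuousAt ?_
        filter_upwards [Iio_mem_nhds ha] with s hs
        exact (hZ0 p vv s hs.le).symm
      · have ht0 : (0:ℝ) ≤ a + r/2 := by linarith
        have hcf : Continuous (fun s : ℝ => clamp n r hr (P (a + r/2) p vv) (s - (a + r/2))) :=
          (continuous_clamp hr (P (a + r/2) p vv)).comp (continuous_id.sub continuous_const)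
        refine ContinuousAt.congr hcf.continuousAt ?_
        filter_upwards [Ioo_mem_nhds (show a + r/2 - r < a by linarith)
          (show a < a + r/2 by linarith)] with s hs
        have h := hPseg p vv (a + r/2) ht0 (s - (a + r/2)) (by linarith [hs.1]) (by linarith [hs.2])
        rw [show a + r/2 + (s - (a + r/2)) = s by ring] at h
        exact h
    have hPval : ∀ (vv : Seg n r) (t : ℝ), 0 ≤ t → ∀ x : Set.Icc (-r) (0:ℝ),
        (P t p vv) x = Z p vv (t + (x:ℝ)) := by
      intro vv t ht x
      have h := hPseg p vv t ht x.1 x.2.1 x.2.2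
      rw [clamp_eq hr _ ⟨x.2.1, x.2.2⟩] at h; exact h
    have hPnorm : ∀ (vv : Seg n r) (t : ℝ), 0 ≤ t → ∀ D : ℝ, 0 ≤ D →
        (∀ s : ℝ, t - r ≤ s → s ≤ t → ‖Z p vv s‖ ≤ D) → ‖P t p vv‖ ≤ D := by
      intro vv t ht D hD hb
      rw [ContinuousMap.norm_le _ hD]
      intro x
      rw [hPval vv t ht x]
      exact hb _ (by linarith [x.2.1]) (by linarith [x.2.2])
    have horb : ∀ t : ℝ, 0 ≤ t → (σ t p.1, u t p.1 p.2) ∈ K := fun t ht => (hKinv p hp).2 t ht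
    have hderivZ : ∀ (vv : Seg n r) (t : ℝ), 0 < t →
        HasDerivAt (Z p vv) (Lop (σ t p.1, u t p.1 p.2) (P t p vv)) t :=
      fun vv t ht => hZode p hp vv t ht
    -- a priori bound on the solutions up to time T
    obtain ⟨N, hN⟩ := exists_nat_ge (T * (2 * (CL + 1)))
    have hNT : T ≤ (N:ℝ) * (1 / (2 * (CL + 1))) := by
      have h2 : (0:ℝ) < 2 * (CL + 1) := by positivity
      rw [mul_one_div, le_div_iff₀ h2]
      exact hN
    have hzB : ∀ m : ℕ, ∀ t : ℝ, t ≤ T → ‖Z p (v m) t‖ ≤ (M + 1) * 2 ^ N := by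
      intro m
      refine apriori (hzcont (v m)) hM0 hCL0 N hNT
        (fun s hs => hzneg (v m) M (hvM m) s hs) ?_
      intro t ht0 htT D hMD hDs
      refine ⟨_, hderivZ (v m) t ht0, ?_⟩
      have hD0 : 0 ≤ D := hM0.trans hMD
      have hPle : ‖P t p (v m)‖ ≤ D := by
        refine hPnorm (v m) t ht0.le D hD0 ?_
        intro s hs1 hs2
        rcases le_or_gt s 0 with hs0 | hs0
        · exact (hzneg (v m) M (hvM m) s hs0).trans hMD
        · exact hDs s hs0 hs2
      calc ‖Lop (σ t p.1, u t p.1 p.2) (P t p (v m))‖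
          ≤ CL * ‖P t p (v m)‖ := hLopB _ (horb t ht0.le) _
      _ ≤ CL * D := mul_le_mul_of_nonneg_left hPle hCL0
    set B : ℝ := (M + 1) * 2 ^ N with hBdef
    have h2N : (1:ℝ) ≤ 2 ^ N := one_le_pow₀ (by norm_num)
    have hB0 : 0 < B := by positivity
    have hPB : ∀ m, ∀ t : ℝ, 0 ≤ t → t ≤ T → ‖P t p (v m)‖ ≤ B := by
      intro m t h1 h2
      exact hPnorm (v m) t h1 B hB0.le (fun s _ hs2 => hzB m s (hs2.trans h2))
    -- uniform Lipschitz bound on [0, T]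
    have hLipZ : ∀ m, ∀ s t : ℝ, 0 ≤ s → s ≤ t → t ≤ T →
        ‖Z p (v m) t - Z p (v m) s‖ ≤ CL * B * (t - s) := by
      intro m
      refine mvt_of_hasDerivAt_Ioc (a := 0) (b := T)
        (g := fun t => Lop (σ t p.1, u t p.1 p.2) (P t p (v m)))
        (hzcont (v m)) (by positivity) ?_ ?_
      · exact fun t htm => hderivZ (v m) t htm.1
      · intro t htm
        refine (hLopB _ (horb t htm.1.le) _).trans ?_
        exact mul_le_mul_of_nonneg_left (hPB m t htm.1.le htm.2) hCL0
    -- Arzelà–Ascoli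
    haveI hXc : CompactSpace (Set.Icc (0:ℝ) T) := isCompact_iff_compactSpace.mp isCompact_Icc
    set LL : ℝ≥0 := (CL * B).toNNReal with hLLdef
    have hLLc : ((LL : ℝ)) = CL * B := Real.coe_toNNReal _ (by positivity)
    set Fb : ℕ → (BoundedContinuousFunction (Set.Icc (0:ℝ) T) (Evec n)) := fun m =>
      BoundedContinuousFunction.mkOfCompact
        ⟨fun x => Z p (v m) (x:ℝ), (hzcont (v m)).comp continuous_subtype_val⟩ with hFbdef
    set SA : Set (BoundedContinuousFunction (Set.Icc (0:ℝ) T) (Evec n)) :=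
      {f | LipschitzWith LL ⇑f ∧ ∀ x, f x ∈ Metric.closedBall (0 : Evec n) B} with hSAdef
    have hFA : ∀ m, Fb m ∈ SA := by
      intro m
      constructor
      · rw [lipschitzWith_iff_dist_le_mul]
        intro x y
        rw [hLLc]
        have hdxy : dist x y = |(x:ℝ) - (y:ℝ)| := by rw [Subtype.dist_eq, Real.dist_eq]
        rcases le_total (x:ℝ) (y:ℝ) with hxy | hxy
        · have h1 := hLipZ m x y x.2.1 hxy y.2.2
          rw [dist_eq_norm, norm_sub_rev, hdxy, abs_sub_comm, abs_of_nonneg (by linarith)]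
          exact h1
        · have h1 := hLipZ m y x y.2.1 hxy x.2.2
          rw [dist_eq_norm, hdxy, abs_of_nonneg (by linarith)]
          exact h1
      · intro x
        exact mem_closedBall_zero_iff.mpr (hzB m x x.2.2)
    have hSAclosed : IsClosed SA := by
      have hrw : SA = (⋂ (x) (y), {f : BoundedContinuousFunction (Set.Icc (0:ℝ) T) (Evec n) |
          dist (f x) (f y) ≤ (LL : ℝ) * dist x y}) ∩
          (⋂ x, {f : BoundedContinuousFunction (Set.Icc (0:ℝ) T) (Evec n) | f x ∈ Metric.closedBall (0 : Evec n) B}) := by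
        ext f
        simp only [hSAdef, Set.mem_setOf_eq, Set.mem_inter_iff, Set.mem_iInter,
          lipschitzWith_iff_dist_le_mul]
      rw [hrw]
      refine IsClosed.inter ?_ ?_
      · refine isClosed_iInter fun x => isClosed_iInter fun y => ?_
        exact isClosed_le (Continuous.dist
          (continuous_eval_const x)
          (continuous_eval_const y)) continuous_const
      · refine isClosed_iInter fun x => ?_
        exact IsClosed.preimage (continuous_eval_const x)
          Metric.isClosed_closedBall
    have hequi : Equicontinuous ((↑) : SA → (Set.Icc (0:ℝ) T) → Evec n) := by
      intro x
      rw [Metric.equicontinuousAt_iff]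
      intro ε hε
      refine ⟨ε / ((LL:ℝ) + 1), by positivity, fun y hy f => ?_⟩
      have h1 : dist (f.1 x) (f.1 y) ≤ (LL:ℝ) * dist x y := f.2.1.dist_le_mul x y
      have h2 : dist x y < ε / ((LL:ℝ) + 1) := by rwa [dist_comm] at hy
      have h3 : (0:ℝ) ≤ (LL:ℝ) := LL.coe_nonneg
      have h4 : (LL:ℝ) * dist x y < ε := by
        have h5 : (LL:ℝ) * dist x y ≤ (LL:ℝ) * (ε / ((LL:ℝ) + 1)) :=
          mul_le_mul_of_nonneg_left h2.le h3
        have h6 : (LL:ℝ) * (ε / ((LL:ℝ) + 1)) < ε := by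
          rw [div_eq_inv_mul]
          have h7 : (LL:ℝ) < (LL:ℝ) + 1 := by linarith
          have h8 : (0:ℝ) < (LL:ℝ) + 1 := by linarith
          calc (LL:ℝ) * (((LL:ℝ) + 1)⁻¹ * ε) = ((LL:ℝ) / ((LL:ℝ) + 1)) * ε := by ring
          _ < 1 * ε := by
            refine mul_lt_mul_of_pos_right ?_ hε
            rw [div_lt_one h8]
            exact h7
          _ = ε := one_mul ε
        linarith
      exact lt_of_le_of_lt h1 h4
    have hSAcpt : IsCompact SA :=
      BoundedContinuousFunction.arzela_ascoli₂ (Metric.closedBall 0 B)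
        (isCompact_closedBall _ _) SA hSAclosed (fun f x hf => hf.2 x) hequi
    obtain ⟨f', hf'SA, φ, hφ, hconv⟩ := hSAcpt.tendsto_subseq hFA
    have hdist0 : Tendsto (fun k => dist (Fb (φ k)) f') atTop (𝓝 0) :=
      tendsto_iff_dist_tendsto_zero.mp hconv
    -- the limit segment
    have hmemX : ∀ s : Set.Icc (-r) (0:ℝ), T + (s:ℝ) ∈ Set.Icc (0:ℝ) T :=
      fun s => ⟨by linarith [s.2.1], by linarith [s.2.2]⟩
    set w : Seg n r := ContinuousMap.mk (fun s => f' ⟨T + (s:ℝ), hmemX s⟩)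
      (f'.continuous.comp (Continuous.subtype_mk
        (continuous_const.add continuous_subtype_val) _)) with hwdef
    have hwval : ∀ s : Set.Icc (-r) (0:ℝ), w s = f' ⟨T + (s:ℝ), hmemX s⟩ := fun s => rfl
    have hwlip : LipschitzWith LL ⇑w := by
      rw [lipschitzWith_iff_dist_le_mul]
      intro x y
      have h1 := lipschitzWith_iff_dist_le_mul.mp hf'SA.1 ⟨T + (x:ℝ), hmemX x⟩
        ⟨T + (y:ℝ), hmemX y⟩
      have h2 : dist (⟨T + (x:ℝ), hmemX x⟩ : Set.Icc (0:ℝ) T) ⟨T + (y:ℝ), hmemX y⟩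
          = dist x y := by
        rw [Subtype.dist_eq, Subtype.dist_eq, Real.dist_eq, Real.dist_eq]
        congr 1
        ring
      rw [hwval, hwval]
      rw [h2] at h1
      exact h1
    have hmemX2 : ∀ (t : ℝ), T - r ≤ t → t ≤ T → ∀ x : Set.Icc (-r) (0:ℝ),
        t + (x:ℝ) ∈ Set.Icc (0:ℝ) T := fun t h1 h2 x => ⟨by linarith [x.2.1], by linarith [x.2.2]⟩
    -- sup-norm estimate
    have hsup : ∀ k, ‖P T p (v (φ k)) - w‖ ≤ dist (Fb (φ k)) f' := by
      intro k
      rw [ContinuousMap.norm_le _ dist_nonneg]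
      intro x
      rw [ContinuousMap.sub_apply, hPval _ T hT0 x, hwval]
      have he : Z p (v (φ k)) (T + (x:ℝ)) = Fb (φ k) ⟨T + (x:ℝ), hmemX x⟩ := rfl
      rw [he, ← dist_eq_norm]
      exact BoundedContinuousFunction.dist_coe_le_dist _
    -- Lipschitz estimate for the difference
    have hkey : ∀ k, ∀ aa bb : Set.Icc (-r) (0:ℝ), (aa:ℝ) ≤ (bb:ℝ) →
        ‖(Z p (v (φ k)) (T + (aa:ℝ)) - f' ⟨T + (aa:ℝ), hmemX aa⟩) -
         (Z p (v (φ k)) (T + (bb:ℝ)) - f' ⟨T + (bb:ℝ), hmemX bb⟩)‖ ≤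
        CL * dist (Fb (φ k)) f' * ((bb:ℝ) - (aa:ℝ)) := by
      intro k aa bb habb
      have hstep : ∀ j, ‖(Z p (v (φ k)) (T + (aa:ℝ)) - Z p (v (φ j)) (T + (aa:ℝ))) -
          (Z p (v (φ k)) (T + (bb:ℝ)) - Z p (v (φ j)) (T + (bb:ℝ)))‖ ≤
          CL * dist (Fb (φ k)) (Fb (φ j)) * ((bb:ℝ) - (aa:ℝ)) := by
        intro j
        have hd : ∀ t ∈ Set.Icc (T - r) T, HasDerivAt
            (fun t => Z p (v (φ k)) t - Z p (v (φ j)) t)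
            (Lop (σ t p.1, u t p.1 p.2) (P t p (v (φ k)) - P t p (v (φ j)))) t := by
          intro t htm
          have h1 := hderivZ (v (φ k)) t (by linarith [htm.1] : (0:ℝ) < t)
          have h2 := hderivZ (v (φ j)) t (by linarith [htm.1] : (0:ℝ) < t)
          have h3 := h1.sub h2
          rwa [← map_sub] at h3
        have hgb : ∀ t ∈ Set.Icc (T - r) T,
            ‖Lop (σ t p.1, u t p.1 p.2) (P t p (v (φ k)) - P t p (v (φ j)))‖ ≤
            CL * dist (Fb (φ k)) (Fb (φ j)) := by
          intro t htm
          refine (hLopB _ (horb t (by linarith [htm.1])) _).trans ?_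
          refine mul_le_mul_of_nonneg_left ?_ hCL0
          rw [ContinuousMap.norm_le _ dist_nonneg]
          intro x
          rw [ContinuousMap.sub_apply, hPval _ t (by linarith [htm.1]) x,
            hPval _ t (by linarith [htm.1]) x]
          have he1 : Z p (v (φ k)) (t + (x:ℝ)) =
            Fb (φ k) ⟨t + (x:ℝ), hmemX2 t htm.1 htm.2 x⟩ := rfl
          have he2 : Z p (v (φ j)) (t + (x:ℝ)) =
            Fb (φ j) ⟨t + (x:ℝ), hmemX2 t htm.1 htm.2 x⟩ := rfl
          rw [he1, he2, ← dist_eq_norm]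
          exact BoundedContinuousFunction.dist_coe_le_dist _
        have hmvt := mvt_of_hasDerivAt hd hgb (T + (aa:ℝ))
          ⟨by linarith [aa.2.1], by linarith [aa.2.2]⟩ (T + (bb:ℝ))
          ⟨by linarith [bb.2.1], by linarith [bb.2.2]⟩ (by linarith)
        rw [show (T + (bb:ℝ)) - (T + (aa:ℝ)) = (bb:ℝ) - (aa:ℝ) by ring] at hmvt
        calc ‖(Z p (v (φ k)) (T + (aa:ℝ)) - Z p (v (φ j)) (T + (aa:ℝ))) -
            (Z p (v (φ k)) (T + (bb:ℝ)) - Z p (v (φ j)) (T + (bb:ℝ)))‖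
            = ‖(Z p (v (φ k)) (T + (bb:ℝ)) - Z p (v (φ j)) (T + (bb:ℝ))) -
              (Z p (v (φ k)) (T + (aa:ℝ)) - Z p (v (φ j)) (T + (aa:ℝ)))‖ := norm_sub_rev _ _
        _ ≤ CL * dist (Fb (φ k)) (Fb (φ j)) * ((bb:ℝ) - (aa:ℝ)) := hmvt
      have hja : Tendsto (fun j => Z p (v (φ j)) (T + (aa:ℝ))) atTop
          (𝓝 (f' ⟨T + (aa:ℝ), hmemX aa⟩)) := by
        rw [tendsto_iff_dist_tendsto_zero]
        refine squeeze_zero (fun _ => dist_nonneg) (fun j => ?_) hdist0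
        have he : Z p (v (φ j)) (T + (aa:ℝ)) = Fb (φ j) ⟨T + (aa:ℝ), hmemX aa⟩ := rfl
        rw [he]
        exact BoundedContinuousFunction.dist_coe_le_dist _
      have hjb : Tendsto (fun j => Z p (v (φ j)) (T + (bb:ℝ))) atTop
          (𝓝 (f' ⟨T + (bb:ℝ), hmemX bb⟩)) := by
        rw [tendsto_iff_dist_tendsto_zero]
        refine squeeze_zero (fun _ => dist_nonneg) (fun j => ?_) hdist0
        have he : Z p (v (φ j)) (T + (bb:ℝ)) = Fb (φ j) ⟨T + (bb:ℝ), hmemX bb⟩ := rfl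
        rw [he]
        exact BoundedContinuousFunction.dist_coe_le_dist _
      have hLHS : Tendsto (fun j =>
          ‖(Z p (v (φ k)) (T + (aa:ℝ)) - Z p (v (φ j)) (T + (aa:ℝ))) -
          (Z p (v (φ k)) (T + (bb:ℝ)) - Z p (v (φ j)) (T + (bb:ℝ)))‖) atTop
          (𝓝 ‖(Z p (v (φ k)) (T + (aa:ℝ)) - f' ⟨T + (aa:ℝ), hmemX aa⟩) -
          (Z p (v (φ k)) (T + (bb:ℝ)) - f' ⟨T + (bb:ℝ), hmemX bb⟩)‖) :=
        ((tendsto_const_nhds.sub hja).sub (tendsto_const_nhds.sub hjb)).norm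
      have hRHS : Tendsto (fun j => CL * dist (Fb (φ k)) (Fb (φ j)) * ((bb:ℝ) - (aa:ℝ)))
          atTop (𝓝 (CL * dist (Fb (φ k)) f' * ((bb:ℝ) - (aa:ℝ)))) := by
        have hdj : Tendsto (fun j => dist (Fb (φ k)) (Fb (φ j))) atTop
            (𝓝 (dist (Fb (φ k)) f')) := tendsto_const_nhds.dist hconv
        exact (hdj.const_mul CL).mul_const _
      exact le_of_tendsto_of_tendsto' hLHS hRHS hstep
    have hlipk : ∀ k, LipschitzWith (CL * dist (Fb (φ k)) f').toNNReal
        ⇑(P T p (v (φ k)) - w) := by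
      intro k
      rw [lipschitzWith_iff_dist_le_mul]
      intro xa xb
      rw [Real.coe_toNNReal _ (by positivity)]
      rw [dist_eq_norm, ContinuousMap.sub_apply, ContinuousMap.sub_apply,
        hPval _ T hT0 xa, hPval _ T hT0 xb, hwval, hwval]
      have hdd : dist xa xb = |(xa:ℝ) - (xb:ℝ)| := by rw [Subtype.dist_eq, Real.dist_eq]
      rcases le_total (xa:ℝ) (xb:ℝ) with h | h
      · rw [hdd, abs_of_nonpos (by linarith), neg_sub]
        exact hkey k xa xb h
      · rw [hdd, abs_of_nonneg (by linarith), norm_sub_rev]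
        exact hkey k xb xa h
    refine ⟨φ, hφ, w, ⟨LL, hwlip⟩, ?_⟩
    have hball : ∀ k, Wnorm n r (P T p (v (φ k)) - w) ≤ (1 + CL) * dist (Fb (φ k)) f' := by
      intro k
      have h1 := hsup k
      have h2 : lipC n r (P T p (v (φ k)) - w) ≤ CL * dist (Fb (φ k)) f' :=
        lipC_le (by positivity) (hlipk k)
      have h3 : (0:ℝ) ≤ dist (Fb (φ k)) f' := dist_nonneg
      show max ‖P T p (v (φ k)) - w‖ (lipC n r (P T p (v (φ k)) - w)) ≤ _
      refine max_le (by nlinarith) (by nlinarith)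
    refine squeeze_zero (fun k => wnorm_nonneg _) hball ?_
    have hfin := hdist0.const_mul (1 + CL)
    simpa using hfin
  refine ⟨main, fun p hp v M hv => main p hp v M fun m => ?_⟩
  calc ‖v m‖ ≤ Wnorm n r (v m) := le_max_left _ _
  _ ≤ M := (hv m).2
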